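/- Let D > 0, K > 0, p ≥ 1, 0 ≤ q < 2p, δ_b > 0, δ_v > 0, L_b > 0, L_v > 0, ε₀ > 0 be reals, set r = 1/(2p−q), C = (K/D)^{1/(2p−q)}, and η = min(δ_b, δ_v)/(2p−q). Let Δ : (0,∞) × (0,∞) → ℝ satisfy |Δ(ε,B) − D·ε^{2p} + K·ε^q/B| ≤ L_b·ε^{2p+δ_b} + L_v·ε^{q+δ_v}/B for all 0 < ε ≤ ε₀ and all B > 0. Fix 0 < m < C < M. Then there exist constants B₄ > 0 and M′ > 0 such that for every B ≥ B₄, every zero ε of Δ(·,B) in the window [m·B^{−r}, M·B^{−r}] satisfies |ε·B^r − C| ≤ M′·B^{−η}. -/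

import Mathlib

open Set in
lemma rpow_sub_rpow_ge (s m M a b : ℝ) (hs : 0 < s) (hm : 0 < m)
    (ha : m ≤ a) (hab : a < b) (hb : b ≤ M) :
    s * min (m ^ (s - 1)) (M ^ (s - 1)) * (b - a) ≤ b ^ s - a ^ s := by
  have ha0 : 0 < a := lt_of_lt_of_le hm ha
  obtain ⟨c, hc, hder⟩ := exists_hasDerivAt_eq_slope (fun t => t ^ s)
    (fun t => s * t ^ (s - 1)) hab
    (continuousOn_id.rpow_const (fun t _ => Or.inr hs.le))
    (fun t ht => Real.hasDerivAt_rpow_const (Or.inl (ne_of_gt (lt_trans ha0 ht.1))))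
  have hc0 : 0 < c := lt_trans ha0 hc.1
  have hcm : m ≤ c := le_trans ha hc.1.le
  have hcM : c ≤ M := le_trans hc.2.le hb
  have hmin : min (m ^ (s - 1)) (M ^ (s - 1)) ≤ c ^ (s - 1) := by
    rcases le_or_gt 1 s with h1 | h1
    · exact le_trans (min_le_left _ _) (Real.rpow_le_rpow hm.le hcm (by linarith))
    · exact le_trans (min_le_right _ _) (Real.rpow_le_rpow_of_nonpos hc0 hcM (by linarith))
  have hba : 0 < b - a := sub_pos.mpr hab
  rw [eq_div_iff hba.ne'] at hder
  have h2 : s * min (m ^ (s - 1)) (M ^ (s - 1)) * (b - a) ≤ s * c ^ (s - 1) * (b - a) := by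
    have := mul_le_mul_of_nonneg_left hmin hs.le
    nlinarith
  linarith [hder ▸ h2]

/-- Explicit convergence rate: under the power-law remainder bound, every zero
of `Δ(·,B)` in the rescaled window `[m B^{−r}, M B^{−r}]` satisfies
`|ε B^r − C| ≤ M' B^{−η}` with `η = min(δb, δv)/(2p−q)`. -/
theorem explicit_convergence_rate
    (D K p q δb δv Lb Lv ε₀ : ℝ)
    (hD : 0 < D) (hK : 0 < K) (hp : 1 ≤ p) (hq0 : 0 ≤ q) (hq : q < 2 * p)
    (hδb : 0 < δb) (hδv : 0 < δv) (hLb : 0 < Lb) (hLv : 0 < Lv) (hε₀ : 0 < ε₀)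
    (Δ : ℝ → ℝ → ℝ)
    (hbound : ∀ ε B : ℝ, 0 < ε → ε ≤ ε₀ → 0 < B →
      |Δ ε B - D * ε ^ (2 * p) + K * ε ^ q / B|
        ≤ Lb * ε ^ (2 * p + δb) + Lv * ε ^ (q + δv) / B)
    (m M : ℝ) (hm : 0 < m) (hmC : m < (K / D) ^ (1 / (2 * p - q)))
    (hCM : (K / D) ^ (1 / (2 * p - q)) < M) :
    ∃ B₄ > (0 : ℝ), ∃ M' > (0 : ℝ), ∀ B ≥ B₄,
      ∀ ε ∈ Set.Icc (m * B ^ (-(1 / (2 * p - q)))) (M * B ^ (-(1 / (2 * p - q)))),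
        Δ ε B = 0 →
          |ε * B ^ (1 / (2 * p - q)) - (K / D) ^ (1 / (2 * p - q))|
            ≤ M' * B ^ (-(min δb δv / (2 * p - q))) := by
  set s := 2 * p - q with hs_def
  have hs : 0 < s := by rw [hs_def]; linarith
  set r := 1 / s with hr_def
  have hr : 0 < r := by rw [hr_def]; positivity
  set C := (K / D) ^ r with hC_def
  have hC0 : 0 < C := lt_trans hm hmC
  have hM0 : 0 < M := lt_trans hC0 hCM
  have hCs : C ^ s = K / D := by
    rw [hC_def, hr_def, one_div, Real.rpow_inv_rpow (by positivity) hs.ne']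
  have hDCs : D * C ^ s = K := by rw [hCs]; field_simp
  -- constants
  set c₁ := s * min (m ^ (s - 1)) (M ^ (s - 1)) with hc₁_def
  have hc₁0 : 0 < c₁ :=
    mul_pos hs (lt_min (Real.rpow_pos_of_pos hm _) (Real.rpow_pos_of_pos hM0 _))
  set c := D * m ^ q * c₁ with hc_def
  have hc0 : 0 < c := mul_pos (mul_pos hD (Real.rpow_pos_of_pos hm _)) hc₁0
  set T := max 1 M with hT_def
  have hT0 : 0 < T := lt_of_lt_of_le one_pos (le_max_left _ _)
  set A := Lb * T ^ (2 * p + δb) + Lv * T ^ (q + δv) with hA_def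
  have hA0 : 0 < A :=
    add_pos (mul_pos hLb (Real.rpow_pos_of_pos hT0 _)) (mul_pos hLv (Real.rpow_pos_of_pos hT0 _))
  refine ⟨max 1 ((M / ε₀) ^ s), lt_of_lt_of_le one_pos (le_max_left _ _),
    A / c, div_pos hA0 hc0, ?_⟩
  intro B hB ε hε hΔ
  have hB1 : (1 : ℝ) ≤ B := le_trans (le_max_left _ _) hB
  have hB0 : 0 < B := lt_of_lt_of_le one_pos hB1
  have hBr : 0 < B ^ r := Real.rpow_pos_of_pos hB0 r
  obtain ⟨hεl, hεu⟩ := hε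
  have hε0 : 0 < ε := lt_of_lt_of_le (by positivity) hεl
  -- ε ≤ ε₀
  have hBrge : M / ε₀ ≤ B ^ r := by
    have h := Real.rpow_le_rpow (by positivity) (le_trans (le_max_right _ _) hB) hr.le
    rwa [← Real.rpow_mul (by positivity), hr_def, mul_one_div, div_self hs.ne',
      Real.rpow_one] at h
  have hεε₀ : ε ≤ ε₀ := by
    refine le_trans hεu ?_
    rw [Real.rpow_neg hB0.le, ← div_eq_mul_inv, div_le_iff₀ hBr]
    calc M = M / ε₀ * ε₀ := by field_simp
    _ ≤ B ^ r * ε₀ := by nlinarith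
    _ = ε₀ * B ^ r := by ring
  -- rescaled variable
  set x := ε * B ^ r with hx_def
  have hBB : B ^ (-r) * B ^ r = 1 := by
    rw [← Real.rpow_add hB0]; simp
  have hm_x : m ≤ x := by
    have h := mul_le_mul_of_nonneg_right hεl hBr.le
    rwa [mul_assoc, hBB, mul_one] at h
  have hM_x : x ≤ M := by
    have h := mul_le_mul_of_nonneg_right hεu hBr.le
    rwa [mul_assoc, hBB, mul_one] at h
  have hx0 : 0 < x := lt_of_lt_of_le hm hm_x
  have key : ∀ t : ℝ, x ^ t = ε ^ t * B ^ (r * t) := fun t => by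
    rw [hx_def, Real.mul_rpow hε0.le (Real.rpow_nonneg hB0.le r), ← Real.rpow_mul hB0.le]
  -- core equalities
  have hexp : r * (2 * p) = r * q + 1 := by
    rw [hr_def, hs_def]; field_simp
    rw [div_add_one (by rw [← hs_def]; exact hs.ne')]; congr 1; ring
  have e1 : D * x ^ (2 * p) - K * x ^ q = (D * ε ^ (2 * p) - K * ε ^ q / B) * B ^ (r * (2 * p)) := by
    rw [key, key, hexp, Real.rpow_add hB0, Real.rpow_one]
    field_simp
  have hB2 : B ^ (r * (2 * p + δb)) * B ^ (-(δb * r)) = B ^ (r * (2 * p)) := by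
    rw [← Real.rpow_add hB0]; congr 1; ring
  have e2 : Lb * ε ^ (2 * p + δb) * B ^ (r * (2 * p)) = Lb * x ^ (2 * p + δb) * B ^ (-(δb * r)) := by
    rw [key, ← hB2]; ring
  have hB3 : B ^ (r * (q + δv)) * B ^ (-(δv * r)) * B = B ^ (r * (2 * p)) := by
    rw [← Real.rpow_add hB0, ← Real.rpow_add_one hB0.ne']
    congr 1
    rw [hr_def, hs_def]; field_simp
    rw [div_add_one (by rw [← hs_def]; exact hs.ne')]; congr 1; ring
  have e3 : Lv * ε ^ (q + δv) / B * B ^ (r * (2 * p)) = Lv * x ^ (q + δv) * B ^ (-(δv * r)) := by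
    rw [key, ← hB3]; field_simp
  -- rescaled remainder bound
  have hres : |D * x ^ (2 * p) - K * x ^ q|
      ≤ Lb * x ^ (2 * p + δb) * B ^ (-(δb * r)) + Lv * x ^ (q + δv) * B ^ (-(δv * r)) := by
    have h1 := hbound ε B hε0 hεε₀ hB0
    rw [hΔ] at h1
    have h2 : |D * ε ^ (2 * p) - K * ε ^ q / B| ≤ Lb * ε ^ (2 * p + δb) + Lv * ε ^ (q + δv) / B := by
      rw [← abs_neg]
      convert h1 using 2
      ring
    have hW : (0 : ℝ) ≤ B ^ (r * (2 * p)) := (Real.rpow_pos_of_pos hB0 _).le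
    calc |D * x ^ (2 * p) - K * x ^ q|
        = |D * ε ^ (2 * p) - K * ε ^ q / B| * B ^ (r * (2 * p)) := by
          rw [e1, abs_mul, abs_of_nonneg hW]
      _ ≤ (Lb * ε ^ (2 * p + δb) + Lv * ε ^ (q + δv) / B) * B ^ (r * (2 * p)) :=
          mul_le_mul_of_nonneg_right h2 hW
      _ = _ := by rw [add_mul, e2, e3]
  -- lower bound for the factored form
  have hxq : m ^ q ≤ x ^ q := Real.rpow_le_rpow hm.le hm_x hq0
  have hxq0 : 0 < x ^ q := Real.rpow_pos_of_pos hx0 q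
  have hxs : x ^ (2 * p) = x ^ q * x ^ s := by
    rw [← Real.rpow_add hx0]; congr 1; rw [hs_def]; ring
  have hfact : D * x ^ (2 * p) - K * x ^ q = D * x ^ q * (x ^ s - C ^ s) := by
    rw [hxs, ← hDCs]; ring
  have h3 : c₁ * |x - C| ≤ |x ^ s - C ^ s| := by
    rcases lt_trichotomy x C with h | h | h
    · have hkey := rpow_sub_rpow_ge s m M x C hs hm hm_x h hCM.le
      rw [abs_of_neg (by linarith : x - C < 0)]
      have : C ^ s - x ^ s ≤ |x ^ s - C ^ s| := by
        rw [abs_sub_comm]; exact le_abs_self _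
      rw [hc₁_def]
      linarith [hkey, this]
    · simp [h]
    · have hkey := rpow_sub_rpow_ge s m M C x hs hm hmC.le h hM_x
      rw [abs_of_pos (by linarith : 0 < x - C)]
      have : x ^ s - C ^ s ≤ |x ^ s - C ^ s| := le_abs_self _
      rw [hc₁_def]
      linarith [hkey, this]
  have hlow : c * |x - C| ≤ |D * x ^ (2 * p) - K * x ^ q| := by
    rw [hfact, abs_mul, abs_of_pos (mul_pos hD hxq0)]
    calc c * |x - C| = D * m ^ q * (c₁ * |x - C|) := by rw [hc_def]; ring
      _ ≤ D * x ^ q * |x ^ s - C ^ s| :=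
          mul_le_mul (mul_le_mul_of_nonneg_left hxq hD.le) h3
            (mul_nonneg hc₁0.le (abs_nonneg _)) (by positivity)
  -- upper bound by A * B^(-η)
  have hηb : B ^ (-(δb * r)) ≤ B ^ (-(min δb δv / s)) := by
    apply Real.rpow_le_rpow_of_exponent_le hB1
    have : min δb δv / s ≤ δb * r := by
      rw [div_eq_mul_inv, hr_def, one_div]
      exact mul_le_mul_of_nonneg_right (min_le_left _ _) (by positivity)
    linarith
  have hηv : B ^ (-(δv * r)) ≤ B ^ (-(min δb δv / s)) := by
    apply Real.rpow_le_rpow_of_exponent_le hB1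
    have : min δb δv / s ≤ δv * r := by
      rw [div_eq_mul_inv, hr_def, one_div]
      exact mul_le_mul_of_nonneg_right (min_le_right _ _) (by positivity)
    linarith
  have hxT : x ≤ T := le_trans hM_x (le_max_right _ _)
  have hxb : x ^ (2 * p + δb) ≤ T ^ (2 * p + δb) :=
    Real.rpow_le_rpow hx0.le hxT (by linarith)
  have hxv : x ^ (q + δv) ≤ T ^ (q + δv) :=
    Real.rpow_le_rpow hx0.le hxT (by linarith)
  have hBη : 0 < B ^ (-(min δb δv / s)) := Real.rpow_pos_of_pos hB0 _
  have hup : Lb * x ^ (2 * p + δb) * B ^ (-(δb * r)) + Lv * x ^ (q + δv) * B ^ (-(δv * r))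
      ≤ A * B ^ (-(min δb δv / s)) := by
    rw [hA_def, add_mul]
    gcongr
  -- conclude
  have hfinal : c * |x - C| ≤ A * B ^ (-(min δb δv / s)) :=
    le_trans hlow (le_trans hres hup)
  rw [div_mul_eq_mul_div, le_div_iff₀ hc0]
  calc |x - C| * c = c * |x - C| := by ring
    _ ≤ A * B ^ (-(min δb δv / s)) := hfinal
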